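/- Let f : ℝ^m → ℝ^n → ℝ^m, let h : ℝ^m → ℝ be bounded, and let U ⊆ ℝ^n be nonempty. For a control sequence u : ℕ → U define the trajectory from x by x₀ = x, x_{t+1} = f(x_t, u_t), and define V(x) = inf over all control sequences u : ℕ → U of sup_{t ∈ ℕ} h(x_t). Then V satisfies the discrete-time Hamilton–Jacobi–Bellman variational equality: for every x ∈ ℝ^m, V(x) = max{ h(x), inf_{u ∈ U} V(f(x,u)) }. -/

import Mathlib

/-- Trajectory from `x` under control sequence `u`: `x₀ = x`, `x_{t+1} = f x_t u_t`. -/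
def trajectory {m n : ℕ} (f : (Fin m → ℝ) → (Fin n → ℝ) → (Fin m → ℝ))
    (x : Fin m → ℝ) (u : ℕ → (Fin n → ℝ)) : ℕ → (Fin m → ℝ)
  | 0 => x
  | t + 1 => f (trajectory f x u t) (u t)

/-- The Hamilton–Jacobi value function
`V(x) = inf_{u : ℕ → U} sup_{t ∈ ℕ} h (x_t)`. -/
noncomputable def hjValue {m n : ℕ} (U : Set (Fin n → ℝ))
    (f : (Fin m → ℝ) → (Fin n → ℝ) → (Fin m → ℝ))
    (h : (Fin m → ℝ) → ℝ) (x : Fin m → ℝ) : ℝ :=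
  ⨅ u : {u : ℕ → (Fin n → ℝ) // ∀ t, u t ∈ U},
    ⨆ t : ℕ, h (trajectory f x u.1 t)

lemma trajectory_succ_shift {m n : ℕ} (f : (Fin m → ℝ) → (Fin n → ℝ) → (Fin m → ℝ))
    (x : Fin m → ℝ) (u : ℕ → (Fin n → ℝ)) (t : ℕ) :
    trajectory f x u (t + 1) = trajectory f (f x (u 0)) (fun s => u (s + 1)) t := by
  induction t with
  | zero => rfl
  | succ t ih =>
      show f (trajectory f x u (t + 1)) (u (t + 1)) = _
      rw [ih]; rfl

/-- With `h` bounded and `U` nonempty, the Hamilton–Jacobi value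
function satisfies the discrete-time HJB variational equality
`V(x) = max { h(x), inf_{u ∈ U} V (f x u) }`. -/
theorem hjValue_satisfies_hjb_equality
    {m n : ℕ} (U : Set (Fin n → ℝ)) (hU : U.Nonempty)
    (f : (Fin m → ℝ) → (Fin n → ℝ) → (Fin m → ℝ))
    (h : (Fin m → ℝ) → ℝ) (hb : ∃ C : ℝ, ∀ x, |h x| ≤ C) :
    ∀ x : Fin m → ℝ,
      hjValue U f h x = max (h x) (sInf ((fun u => hjValue U f h (f x u)) '' U)) := by
  obtain ⟨C, hC⟩ := hb
  obtain ⟨a₀, ha₀⟩ := hU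
  haveI : Nonempty {u : ℕ → (Fin n → ℝ) // ∀ t, u t ∈ U} :=
    ⟨⟨fun _ => a₀, fun _ => ha₀⟩⟩
  have hbdd : ∀ (y : Fin m → ℝ) (u : ℕ → (Fin n → ℝ)),
      BddAbove (Set.range fun t => h (trajectory f y u t)) := by
    intro y u
    exact ⟨C, by rintro _ ⟨t, rfl⟩; exact (abs_le.1 (hC _)).2⟩
  have hS_ge : ∀ (y : Fin m → ℝ) (u : ℕ → (Fin n → ℝ)),
      h y ≤ ⨆ t, h (trajectory f y u t) := by
    intro y u
    exact le_ciSup (hbdd y u) 0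
  have hbddI : ∀ y : Fin m → ℝ,
      BddBelow (Set.range fun u : {u : ℕ → (Fin n → ℝ) // ∀ t, u t ∈ U} =>
        ⨆ t, h (trajectory f y u.1 t)) := by
    intro y
    refine ⟨-C, ?_⟩
    rintro _ ⟨u, rfl⟩
    exact le_trans (abs_le.1 (hC y)).1 (hS_ge y u.1)
  have hV_ge_h : ∀ y : Fin m → ℝ, h y ≤ hjValue U f h y := by
    intro y
    exact le_ciInf fun u => hS_ge y u.1
  intro x
  have hsup : ∀ u : {u : ℕ → (Fin n → ℝ) // ∀ t, u t ∈ U},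
      (⨆ t, h (trajectory f x u.1 t)) =
        max (h x) (⨆ t, h (trajectory f (f x (u.1 0)) (fun s => u.1 (s + 1)) t)) := by
    intro u
    apply le_antisymm
    · apply ciSup_le
      intro t
      cases t with
      | zero => exact le_max_left _ _
      | succ t =>
        refine le_trans ?_ (le_max_right _ _)
        rw [trajectory_succ_shift]
        exact le_ciSup (hbdd (f x (u.1 0)) (fun s => u.1 (s + 1))) t
    · apply max_le
      · exact hS_ge x u.1
      · apply ciSup_le
        intro t
        rw [← trajectory_succ_shift]
        exact le_ciSup (hbdd x u.1) (t + 1)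
  have himg_ne : ((fun u => hjValue U f h (f x u)) '' U).Nonempty :=
    ⟨_, ⟨a₀, ha₀, rfl⟩⟩
  have himg_bdd : BddBelow ((fun u => hjValue U f h (f x u)) '' U) := by
    refine ⟨-C, ?_⟩
    rintro _ ⟨a, -, rfl⟩
    exact le_trans (abs_le.1 (hC _)).1 (hV_ge_h _)
  apply le_antisymm
  · refine le_of_forall_pos_le_add ?_
    intro ε hε
    obtain ⟨_, ⟨a, haU, rfl⟩, hlt⟩ :=
      exists_lt_of_csInf_lt himg_ne
        (lt_add_of_pos_right (sInf ((fun u => hjValue U f h (f x u)) '' U)) (half_pos hε))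
    have hlt2 : hjValue U f h (f x a) < hjValue U f h (f x a) + ε / 2 :=
      lt_add_of_pos_right _ (half_pos hε)
    obtain ⟨u, hu⟩ := exists_lt_of_ciInf_lt hlt2
    set u' : {u : ℕ → (Fin n → ℝ) // ∀ t, u t ∈ U} :=
      ⟨fun t => Nat.casesOn t a (fun s => u.1 s), by
        intro t; cases t with
        | zero => exact haU
        | succ s => exact u.2 s⟩ with hu'
    calc hjValue U f h x ≤ ⨆ t, h (trajectory f x u'.1 t) := ciInf_le (hbddI x) u'
      _ = max (h x) (⨆ t, h (trajectory f (f x a) u.1 t)) := hsup u'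
      _ ≤ max (h x) (sInf ((fun u => hjValue U f h (f x u)) '' U) + ε) := by
          refine max_le_max le_rfl ?_
          have := hu
          have := hlt
          linarith
      _ ≤ max (h x) (sInf ((fun u => hjValue U f h (f x u)) '' U)) + ε := by
          apply max_le
          · exact le_trans (le_max_left _ _) (le_add_of_nonneg_right hε.le)
          · exact add_le_add_left (le_max_right _ _) ε
  · apply max_le
    · exact hV_ge_h x
    · apply le_ciInf
      intro u
      calc sInf ((fun u => hjValue U f h (f x u)) '' U)
          ≤ hjValue U f h (f x (u.1 0)) := csInf_le himg_bdd ⟨u.1 0, u.2 0, rfl⟩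
        _ ≤ ⨆ t, h (trajectory f (f x (u.1 0)) (fun s => u.1 (s + 1)) t) :=
            ciInf_le (hbddI _) ⟨fun s => u.1 (s + 1), fun s => u.2 (s + 1)⟩
        _ ≤ max (h x) (⨆ t, h (trajectory f (f x (u.1 0)) (fun s => u.1 (s + 1)) t)) :=
            le_max_right _ _
        _ = ⨆ t, h (trajectory f x u.1 t) := (hsup u).symm
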